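/- arXiv:2501.11775 — 3 statements merged into one kernel-verified Lean document; each statement's English description precedes it below -/
import Mathlib

section
/- Let W = {ω_0,…,ω_{n-1}} be a basis of F_{q^n} over F_q with dual basis B = {β_0,…,β_{n-1}} and Moore matrix M_W. For 0 ≤ i ≤ n-1, let c_i be the (i,0)-cofactor of M_W and define T_{W,i}(x) = ∑_{k=0}^{n-1} (-1)^{k(n-1)} c_i^{q^k} x^{(q^k-1)/(q-1)}. Then for every y ∈ F_{q^n}^*, Tr_{F_{q^n}/F_q}(β_i y) = det(M_W)^{-1} · y · T_{W,i}(y^{q-1}). -/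
/-- The Moore matrix of `s`, with `(i,j)` entry `s i ^ q ^ j`, `q = |K|`. -/
def mooreMatrix (K : Type*) [Field K] [Fintype K] {L : Type*} [Field L] {m : ℕ}
    (s : Fin m → L) : Matrix (Fin m) (Fin m) L :=
  Matrix.of fun i j => s i ^ Fintype.card K ^ (j : ℕ)

/-- The `(i,0)`-cofactor of the Moore matrix of `s`. -/
def mooreCof (K : Type*) [Field K] [Fintype K] {L : Type*} [Field L] {n : ℕ}
    (s : Fin (n + 1) → L) (i : Fin (n + 1)) : L :=
  (-1 : L) ^ (i : ℕ) *
    ((mooreMatrix K s).submatrix i.succAbove (Fin.succAbove 0)).det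

/-- The projective polynomial `T_{W,i}(x) = ∑ₖ (-1)^{k(n-1)} cᵢ^{qᵏ} x^{(qᵏ-1)/(q-1)}`,
where here the basis has `n + 1` elements (so the paper's `n - 1` is `n`). -/
def Tproj (K : Type*) [Field K] [Fintype K] {L : Type*} [Field L] {n : ℕ}
    (s : Fin (n + 1) → L) (i : Fin (n + 1)) (x : L) : L :=
  ∑ k : Fin (n + 1), (-1 : L) ^ ((k : ℕ) * n) * mooreCof K s i ^ Fintype.card K ^ (k : ℕ) *
    x ^ ((Fintype.card K ^ (k : ℕ) - 1) / (Fintype.card K - 1))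

theorem stmt11 (K L : Type*) [Field K] [Fintype K] [Field L] [Fintype L] [Algebra K L]
    (n : ℕ) (ω β : Fin (n + 1) → L)
    (hω : ∃ b : Module.Basis (Fin (n + 1)) K L, ∀ i, b i = ω i)
    (hβ : ∃ b : Module.Basis (Fin (n + 1)) K L, ∀ i, b i = β i)
    (hdual : ∀ i j, Algebra.trace K L (β i * ω j) = if i = j then 1 else 0) :
    ∀ (i : Fin (n + 1)) (y : L), y ≠ 0 →
      algebraMap K L (Algebra.trace K L (β i * y)) =
        (mooreMatrix K ω).det⁻¹ * y * Tproj K ω i (y ^ (Fintype.card K - 1)) := by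
  classical
  obtain ⟨b, hb⟩ := hω
  haveI : FiniteDimensional K L := Module.Finite.of_basis b
  have hrank : Module.finrank K L = n + 1 := by
    rw [Module.finrank_eq_card_basis b, Fintype.card_fin]
  have hq2 : 2 ≤ Fintype.card K := Fintype.one_lt_card
  have hcardL : Fintype.card L = Fintype.card K ^ (n + 1) := by
    rw [Module.card_eq_pow_finrank (K := K), hrank]
  obtain ⟨p, hp⟩ := CharP.exists K
  haveI : CharP K p := hp
  obtain ⟨m, hpp, hpm⟩ := FiniteField.card K p
  haveI : Fact p.Prime := ⟨hpp⟩
  haveI : CharP L p := charP_of_injective_algebraMap' K (A := L) p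
  obtain ⟨σ, hσ⟩ : ∃ σ : L ≃ₐ[K] L, ∀ z, σ z = z ^ Fintype.card K := by
    let f : L →ₐ[K] L :=
      { toFun := fun z => z ^ Fintype.card K
        map_one' := one_pow _
        map_mul' := fun a b => mul_pow a b _
        map_zero' := zero_pow (by positivity)
        map_add' := fun a b => by simp only [hpm]; exact add_pow_char_pow a b p ↑m
        commutes' := fun c => by
          show (algebraMap K L c) ^ Fintype.card K = algebraMap K L c
          rw [← map_pow, FiniteField.pow_card] }
    exact ⟨AlgEquiv.ofBijective f ((Finite.injective_iff_bijective).mp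
      (f : L →+* L).injective), fun z => rfl⟩
  have hσpow : ∀ (k : ℕ) (z : L), (σ ^ k) z = z ^ Fintype.card K ^ k := by
    intro k
    induction k with
    | zero => intro z; simp
    | succ k ih =>
      intro z
      rw [pow_succ, AlgEquiv.mul_apply, hσ z, ih, ← pow_mul, ← pow_succ']
  have key : ∀ k l : Fin (n + 1), (k : ℕ) < (l : ℕ) → σ ^ (k : ℕ) = σ ^ (l : ℕ) → False := by
    intro k l hkl' hkl
    obtain ⟨ζ, hζ⟩ := IsCyclic.exists_generator (α := Lˣ)
    have hord : orderOf ζ = Fintype.card K ^ (n + 1) - 1 := by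
      rw [orderOf_eq_card_of_forall_mem_zpowers hζ, Nat.card_eq_fintype_card,
        Fintype.card_units, hcardL]
    have h1 : (ζ : L) ^ Fintype.card K ^ (k : ℕ) = (ζ : L) ^ Fintype.card K ^ (l : ℕ) := by
      have := congrArg (fun e : L ≃ₐ[K] L => e (ζ : L)) hkl
      simpa [hσpow] using this
    have h2 : ζ ^ Fintype.card K ^ (k : ℕ) = ζ ^ Fintype.card K ^ (l : ℕ) :=
      Units.ext (by push_cast; exact h1)
    have h3 : Fintype.card K ^ (k : ℕ) ≡ Fintype.card K ^ (l : ℕ)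
        [MOD Fintype.card K ^ (n + 1) - 1] := by
      rw [← hord]; exact pow_eq_pow_iff_modEq.mp h2
    have hlt : Fintype.card K ^ (k : ℕ) < Fintype.card K ^ (l : ℕ) :=
      Nat.pow_lt_pow_right hq2 hkl'
    have hdvd : (Fintype.card K ^ (n + 1) - 1) ∣
        Fintype.card K ^ (l : ℕ) - Fintype.card K ^ (k : ℕ) :=
      (Nat.modEq_iff_dvd' (le_of_lt hlt)).mp h3
    have hpos : 0 < Fintype.card K ^ (l : ℕ) - Fintype.card K ^ (k : ℕ) := by omega
    have hle := Nat.le_of_dvd hpos hdvd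
    have h4 : Fintype.card K ^ (l : ℕ) ≤ Fintype.card K ^ n :=
      Nat.pow_le_pow_right (by omega) (by omega)
    have h5 : Fintype.card K ^ n < Fintype.card K ^ (n + 1) :=
      Nat.pow_lt_pow_right hq2 (Nat.lt_succ_self n)
    have h6 : 1 ≤ Fintype.card K ^ (k : ℕ) := Nat.one_le_pow _ _ (by omega)
    omega
  have hbij : Function.Bijective (fun k : Fin (n + 1) => σ ^ (k : ℕ)) := by
    rw [Fintype.bijective_iff_injective_and_card]
    refine ⟨fun k l hkl => ?_, by rw [Fintype.card_fin, ← Nat.card_eq_fintype_card, IsGalois.card_aut_eq_finrank, hrank]⟩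
    rcases lt_trichotomy (k : ℕ) (l : ℕ) with h | h | h
    · exact absurd hkl (fun hh => key k l h hh)
    · exact Fin.ext h
    · exact absurd hkl.symm (fun hh => key l k h hh)
  have htr : ∀ z : L, algebraMap K L (Algebra.trace K L z) =
      ∑ k : Fin (n + 1), z ^ Fintype.card K ^ (k : ℕ) := by
    intro z
    rw [trace_eq_sum_automorphisms]
    exact (Fintype.sum_bijective _ hbij _ _ (fun k => (hσpow (k : ℕ) z).symm)).symm
  have hBM : (Matrix.of fun i k : Fin (n + 1) => β i ^ Fintype.card K ^ (k : ℕ)) *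
      (mooreMatrix K ω).transpose = 1 := by
    ext i j
    rw [Matrix.mul_apply, Matrix.one_apply]
    have hterm : ∀ k : Fin (n + 1),
        (Matrix.of fun i k : Fin (n + 1) => β i ^ Fintype.card K ^ (k : ℕ)) i k *
          (mooreMatrix K ω).transpose k j = (β i * ω j) ^ Fintype.card K ^ (k : ℕ) := by
      intro k; simp [mooreMatrix, mul_pow]
    rw [Finset.sum_congr rfl (fun k _ => hterm k), ← htr, hdual]
    split_ifs <;> simp
  have hdet : (mooreMatrix K ω).det ≠ 0 := by
    intro h0
    have hd := congrArg Matrix.det hBM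
    rw [Matrix.det_mul, Matrix.det_transpose, h0, mul_zero, Matrix.det_one] at hd
    exact zero_ne_one hd
  have hβeq : ∀ i, β i = (mooreMatrix K ω).det⁻¹ * mooreCof K ω i := by
    intro i
    have h1 : ((mooreMatrix K ω).transpose)⁻¹ =
        Matrix.of fun i k : Fin (n + 1) => β i ^ Fintype.card K ^ (k : ℕ) :=
      Matrix.inv_eq_left_inv hBM
    have h2 : β i = ((mooreMatrix K ω).transpose)⁻¹ i 0 := by rw [h1]; simp
    rw [h2, Matrix.inv_def, Matrix.smul_apply, ← Matrix.adjugate_transpose,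
      Matrix.transpose_apply, Matrix.adjugate_fin_succ_eq_det_submatrix,
      Matrix.det_transpose, Ring.inverse_eq_inv, mooreCof]
    simp [smul_eq_mul]
  have hneg : (-1 : L) ^ Fintype.card K = -1 := by
    have h := congrArg (algebraMap K L) (FiniteField.pow_card (-1 : K))
    simpa using h
  have hnegpow : ∀ a : ℕ, ((-1 : L) ^ a) ^ Fintype.card K = (-1 : L) ^ a := by
    intro a
    rcases Nat.even_or_odd a with h | h
    · rw [h.neg_one_pow, one_pow]
    · rw [h.neg_one_pow, hneg]
  have hmapσ : (mooreMatrix K ω).map (fun z => z ^ Fintype.card K) =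
      (mooreMatrix K ω).submatrix id (finRotate (n + 1)) := by
    ext i j
    simp only [Matrix.map_apply, Matrix.submatrix_apply, id_eq, mooreMatrix, Matrix.of_apply]
    rw [← pow_mul, ← pow_succ, finRotate_succ_apply, Fin.val_add_one]
    split_ifs with h
    · rw [pow_zero, pow_one]
      have hj : (j : ℕ) + 1 = n + 1 := by rw [h]; simp
      rw [hj, ← hcardL, FiniteField.pow_card]
    · rfl
  have hdetq : (mooreMatrix K ω).det ^ Fintype.card K =
      (-1 : L) ^ n * (mooreMatrix K ω).det := by
    have h1 : (mooreMatrix K ω).det ^ Fintype.card K =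
        ((mooreMatrix K ω).map (fun z => z ^ Fintype.card K)).det := by
      have h := RingHom.map_det (iterateFrobenius L p ↑m) (mooreMatrix K ω)
      simp only [iterateFrobenius_def] at h
      rw [hpm]
      convert h using 2
      rfl
    rw [h1, hmapσ, Matrix.det_permute', sign_finRotate]
    push_cast
    ring
  have hdetqk : ∀ k : ℕ, (mooreMatrix K ω).det ^ Fintype.card K ^ k =
      (-1 : L) ^ (n * k) * (mooreMatrix K ω).det := by
    intro k
    induction k with
    | zero => simp
    | succ k ih =>
      rw [pow_succ, pow_mul, ih, mul_pow, hnegpow, hdetq, Nat.mul_succ, pow_add, mul_assoc]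
  have hinvain : ∀ a : ℕ, ((-1 : L) ^ a)⁻¹ = (-1 : L) ^ a := by
    intro a
    rcases Nat.even_or_odd a with h | h
    · rw [h.neg_one_pow, inv_one]
    · rw [h.neg_one_pow, inv_neg, inv_one]
  have hβpow : ∀ (i : Fin (n + 1)) (k : ℕ), β i ^ Fintype.card K ^ k =
      (-1 : L) ^ (n * k) * ((mooreMatrix K ω).det⁻¹ * mooreCof K ω i ^ Fintype.card K ^ k) := by
    intro i k
    rw [hβeq i, mul_pow, inv_pow, hdetqk, mul_inv, hinvain, mul_assoc]
  intro i y hy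
  rw [htr]
  simp only [Tproj]
  rw [Finset.mul_sum]
  refine Finset.sum_congr rfl (fun k _ => ?_)
  have hdvd : (Fintype.card K - 1) ∣ (Fintype.card K ^ (k : ℕ) - 1) := by
    simpa using Nat.sub_dvd_pow_sub_pow (Fintype.card K) 1 (k : ℕ)
  have hE : (Fintype.card K - 1) * ((Fintype.card K ^ (k : ℕ) - 1) / (Fintype.card K - 1)) =
      Fintype.card K ^ (k : ℕ) - 1 := Nat.mul_div_cancel' hdvd
  have hypow : (y ^ (Fintype.card K - 1)) ^
        ((Fintype.card K ^ (k : ℕ) - 1) / (Fintype.card K - 1)) =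
      y ^ (Fintype.card K ^ (k : ℕ) - 1) := by
    rw [← pow_mul, hE]
  have hy2 : y * y ^ (Fintype.card K ^ (k : ℕ) - 1) = y ^ Fintype.card K ^ (k : ℕ) := by
    rw [← pow_succ']
    congr 1
    have hpos : 0 < Fintype.card K ^ (k : ℕ) := pow_pos (by omega) _
    omega
  rw [mul_pow, hβpow i (k : ℕ), hypow, ← hy2]
  ring
end

section
/- With notation as above (W a basis of F_{q^n} over F_q, T_{W,i} the projective polynomials defined from the (i,0)-cofactors of the Moore matrix M_W), the polynomials T_{W,0}, …, T_{W,n-1} have no common root in μ_{(q^n-1)/(q-1)}. -/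
open Matrix Finset

section aux

variable {K L : Type*} [Field K] [Fintype K] [Field L] [Fintype L] [Algebra K L]

/-- Moore matrix of a basis has nonzero determinant. -/
lemma moore_det_ne_zero {n : ℕ} (b : Module.Basis (Fin (n + 1)) K L) :
    (mooreMatrix K (fun i => b i)).det ≠ 0 := by
  classical
  set q := Fintype.card K with hqdef
  obtain ⟨p, hcp⟩ := CharP.exists K
  haveI : CharP K p := hcp
  obtain ⟨m, hp, hqp⟩ := FiniteField.card K p
  haveI : Fact p.Prime := ⟨hp⟩
  haveI : CharP L p := charP_of_injective_algebraMap (algebraMap K L).injective p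
  have hq1 : 1 < q := Fintype.one_lt_card
  have hcardL : Fintype.card L = q ^ (n + 1) := by
    rw [hqdef, Module.card_fintype b, Fintype.card_fin]
  intro hdet
  obtain ⟨v, hv, hmv⟩ := (Matrix.exists_mulVec_eq_zero_iff).mpr hdet
  have hfrob : ∀ (a : K) (j : ℕ), (algebraMap K L a) ^ q ^ j = algebraMap K L a := by
    intro a j; rw [← map_pow, FiniteField.pow_card_pow]
  have hadd : ∀ (z w : L) (j : ℕ), (z + w) ^ q ^ j = z ^ q ^ j + w ^ q ^ j := by
    intro z w j
    have h : q ^ j = p ^ ((m : ℕ) * j) := by rw [hqdef, hqp, ← pow_mul]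
    rw [h]; exact add_pow_char_pow z w p ((m : ℕ) * j)
  let φ : L →ₗ[K] L :=
    { toFun := fun z => ∑ j : Fin (n + 1), v j * z ^ q ^ (j : ℕ)
      map_add' := by
        intro z w
        simp only [hadd, mul_add]
        rw [Finset.sum_add_distrib]
      map_smul' := by
        intro a z
        simp only [Algebra.smul_def, RingHom.id_apply, mul_pow, hfrob, Finset.mul_sum]
        exact Finset.sum_congr rfl fun j _ => by ring }
  have hφ0 : ∀ z : L, (∑ j : Fin (n + 1), v j * z ^ q ^ (j : ℕ)) = 0 := by
    have hφ : φ = 0 := by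
      apply b.ext
      intro i
      have h := congrFun hmv i
      simp only [Matrix.mulVec, dotProduct, mooreMatrix, Matrix.of_apply,
        Pi.zero_apply] at h
      show (∑ j : Fin (n + 1), v j * (b i) ^ q ^ (j : ℕ)) = 0
      rw [← h]
      exact Finset.sum_congr rfl fun j _ => mul_comm _ _
    intro z
    have := congrArg (fun f : L →ₗ[K] L => f z) hφ
    exact this
  -- Dedekind independence of the power maps
  have hinj : Function.Injective
      (fun j : Fin (n + 1) => (powMonoidHom (q ^ (j : ℕ)) : L →* L)) := by
    intro a c hac
    obtain ⟨g, hg⟩ := IsCyclic.exists_generator (α := Lˣ)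
    have horder : orderOf g = q ^ (n + 1) - 1 := by
      rw [orderOf_eq_card_of_forall_mem_zpowers hg, Nat.card_eq_fintype_card,
        Fintype.card_units, hcardL]
    have happ : ((g : L)) ^ q ^ (a : ℕ) = ((g : L)) ^ q ^ (c : ℕ) := by
      have := congrArg (fun f : L →* L => f (g : L)) hac
      simpa [powMonoidHom] using this
    have hu : g ^ q ^ (a : ℕ) = g ^ q ^ (c : ℕ) := Units.ext (by push_cast; exact happ)
    rw [pow_eq_pow_iff_modEq, horder] at hu
    have hle : ∀ d : Fin (n + 1), q ^ (d : ℕ) ≤ q ^ n :=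
      fun d => Nat.pow_le_pow_right (by omega) (Fin.is_le d)
    have hqn : q ^ n < q ^ (n + 1) := by
      have h4 : 1 ≤ q ^ n := Nat.one_le_pow _ _ (by omega)
      rw [pow_succ]
      nlinarith
    have key : ∀ a c : Fin (n + 1), (a : ℕ) ≤ (c : ℕ) →
        q ^ (a : ℕ) ≡ q ^ (c : ℕ) [MOD q ^ (n + 1) - 1] →
        q ^ (a : ℕ) = q ^ (c : ℕ) := by
      intro a c hac h
      have hd := (Nat.modEq_iff_dvd' (Nat.pow_le_pow_right (by omega) hac)).mp h
      have h4 : 1 ≤ q ^ (a : ℕ) := Nat.one_le_pow _ _ (by omega)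
      rcases Nat.eq_zero_or_pos (q ^ (c : ℕ) - q ^ (a : ℕ)) with h0 | hpos
      · have h5 := Nat.pow_le_pow_right (show 1 ≤ q by omega) hac
        omega
      · have h6 := Nat.le_of_dvd hpos hd
        have h5 := hle c
        omega
    rcases le_total (a : ℕ) (c : ℕ) with h | h
    · exact Fin.ext (Nat.pow_right_injective hq1 (key a c h hu))
    · exact Fin.ext (Nat.pow_right_injective hq1 (key c a h hu.symm).symm)
  have hli := (linearIndependent_monoidHom L L).comp _ hinj
  have hsum : (∑ j : Fin (n + 1),
      v j • ((fun f : L →* L => (f : L → L)) ∘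
        fun j : Fin (n + 1) => (powMonoidHom (q ^ (j : ℕ)) : L →* L)) j) = 0 := by
    funext z
    simpa [powMonoidHom] using hφ0 z
  have hzero := Fintype.linearIndependent_iff.mp hli v hsum
  exact hv (funext fun j => hzero j)

end aux

theorem stmt12 (K L : Type*) [Field K] [Fintype K] [Field L] [Fintype L] [Algebra K L]
    (n : ℕ) (ω : Fin (n + 1) → L)
    (hω : ∃ b : Module.Basis (Fin (n + 1)) K L, ∀ i, b i = ω i) :
    ∀ x : L, x ≠ 0 →
      x ^ ((Fintype.card K ^ (n + 1) - 1) / (Fintype.card K - 1)) = 1 →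
        ∃ i : Fin (n + 1), Tproj K ω i x ≠ 0 := by
  classical
  obtain ⟨b, hb⟩ := hω
  have hωb : ω = fun i => b i := funext fun i => (hb i).symm
  set q := Fintype.card K with hqdef
  set M := mooreMatrix K ω with hM
  have hdetM : M.det ≠ 0 := by
    rw [hM, hωb]; exact moore_det_ne_zero b
  obtain ⟨p, hcp⟩ := CharP.exists K
  haveI : CharP K p := hcp
  obtain ⟨m, hp, hqp⟩ := FiniteField.card K p
  haveI : Fact p.Prime := ⟨hp⟩
  haveI : CharP L p := charP_of_injective_algebraMap (algebraMap K L).injective p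
  have hq1 : 1 < q := Fintype.one_lt_card
  have hcardL : Fintype.card L = q ^ (n + 1) := by
    rw [hqdef, Module.card_fintype b, Fintype.card_fin]
  set σ : L →+* L := iterateFrobenius L p m with hσdef
  have hσ : ∀ z : L, σ z = z ^ q := by
    intro z; rw [hσdef, iterateFrobenius_def, ← hqp]
  set P : Matrix (Fin (n + 1)) (Fin (n + 1)) L :=
    ((finRotate (n + 1)).symm.toPEquiv.toMatrix) with hP
  set Q : Matrix (Fin (n + 1)) (Fin (n + 1)) L :=
    ((finRotate (n + 1)).toPEquiv.toMatrix) with hQ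
  -- Frobenius on the Moore matrix rotates the columns.
  have hMP : σ.mapMatrix M = M * P := by
    rw [hP, PEquiv.mul_toMatrix_toPEquiv]
    ext i j
    simp only [RingHom.mapMatrix_apply, Matrix.map_apply, Matrix.submatrix_apply,
      Equiv.symm_symm, id_eq, hσ]
    show (M i j) ^ q = M i (finRotate (n + 1) j)
    rw [hM]
    simp only [mooreMatrix, Matrix.of_apply]
    rw [← pow_mul, ← pow_succ]
    rcases lt_or_eq_of_le (Nat.lt_succ_iff.mp j.isLt) with hj | hj
    · congr 1
      rw [finRotate_succ_apply]
      rw [Fin.val_add_one_of_lt (by rwa [Fin.lt_iff_val_lt_val, Fin.val_last])]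
    · have hjlast : j = Fin.last n := Fin.ext hj
      rw [hjlast, finRotate_last]
      simp only [Fin.val_last, Fin.val_zero, pow_zero, pow_one]
      rw [← hcardL]
      exact FiniteField.pow_card _
  have hPQ : P * Q = 1 := by
    rw [hP, hQ, PEquiv.toMatrix_toPEquiv_mul]
    ext i j
    rw [Matrix.submatrix_apply, PEquiv.toMatrix_toPEquiv_apply, id_eq,
      Equiv.apply_symm_apply, Matrix.one_apply, Pi.single_apply]
    simp only [eq_comm]
  have hdetP : P.det = (-1 : L) ^ n := by
    rw [hP]
    have : ((finRotate (n + 1)).symm.toPEquiv.toMatrix : Matrix _ _ L) =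
        Equiv.Perm.permMatrix L ((finRotate (n + 1))⁻¹ : Equiv.Perm (Fin (n + 1))) := rfl
    rw [this, Matrix.det_permutation]
    simp [sign_finRotate]
  have hadjP : adjugate P = ((-1 : L) ^ n) • Q := by
    calc adjugate P = adjugate P * (P * Q) := by rw [hPQ, mul_one]
      _ = (adjugate P * P) * Q := by rw [mul_assoc]
      _ = (P.det • (1 : Matrix _ _ L)) * Q := by rw [Matrix.adjugate_mul]
      _ = ((-1 : L) ^ n) • Q := by rw [hdetP, Matrix.smul_mul, one_mul]
  have hkey : ∀ j i, σ (adjugate M j i) =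
      (-1 : L) ^ n * adjugate M (finRotate (n + 1) j) i := by
    have hmain : σ.mapMatrix (adjugate M) =
        ((-1 : L) ^ n) • ((adjugate M).submatrix (finRotate (n + 1)) id) := by
      rw [RingHom.map_adjugate, hMP, Matrix.adjugate_mul_distrib, hadjP,
        Matrix.smul_mul, hQ, PEquiv.toMatrix_toPEquiv_mul]
    intro j i
    have := congrFun (congrFun hmain j) i
    simpa using this
  have hnegq : ((-1 : L)) ^ q = -1 := by
    rcases hp.eq_two_or_odd' with h2 | hodd
    · subst h2
      haveI : CharP L 2 := by assumption
      have hneg : (-1 : L) = 1 := by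
        rw [neg_eq_iff_add_eq_zero]
        exact CharTwo.add_self_eq_zero 1
      rw [hneg, one_pow]
    · have : Odd q := by rw [hqdef, hqp]; exact hodd.pow
      exact this.neg_one_pow
  -- the iterated cofactor relation
  have hcof0 : ∀ i, adjugate M 0 i = mooreCof K ω i := by
    intro i
    rw [Matrix.adjugate_fin_succ_eq_det_submatrix]
    simp only [mooreCof, Fin.val_zero, add_zero, hM]
  have claim : ∀ (t : ℕ) (h : t < n + 1) (i : Fin (n + 1)),
      adjugate M ⟨t, h⟩ i = (-1 : L) ^ (n * t) * (mooreCof K ω i) ^ q ^ t := by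
    intro t
    induction t with
    | zero =>
      intro h i
      have h0 : (⟨0, h⟩ : Fin (n + 1)) = 0 := rfl
      rw [h0, hcof0]
      simp
    | succ t ih =>
      intro h i
      have hlt : t < n + 1 := by omega
      have hrot : finRotate (n + 1) ⟨t, hlt⟩ = ⟨t + 1, h⟩ := by
        rw [finRotate_succ_apply]
        apply Fin.ext
        rw [Fin.val_add_one_of_lt]
        rw [Fin.lt_iff_val_lt_val, Fin.val_last]
        exact Nat.lt_of_succ_lt_succ h
      have h1 := hkey ⟨t, hlt⟩ i
      rw [hrot, ih hlt i] at h1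
      have h2 : σ ((-1 : L) ^ (n * t) * mooreCof K ω i ^ q ^ t) =
          (-1 : L) ^ (n * t) * mooreCof K ω i ^ q ^ (t + 1) := by
        rw [hσ, mul_pow]
        congr 1
        · rw [pow_right_comm, hnegq]
        · rw [← pow_mul, ← pow_succ]
      rw [h2] at h1
      have h3 : (-1 : L) ^ n * ((-1 : L) ^ n * adjugate M ⟨t + 1, h⟩ i) =
          adjugate M ⟨t + 1, h⟩ i := by
        rw [← mul_assoc, ← pow_add, Even.neg_one_pow ⟨n, rfl⟩, one_mul]
      calc adjugate M ⟨t + 1, h⟩ i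
          = (-1 : L) ^ n * ((-1 : L) ^ n * adjugate M ⟨t + 1, h⟩ i) := h3.symm
        _ = (-1 : L) ^ n * ((-1 : L) ^ (n * t) * mooreCof K ω i ^ q ^ (t + 1)) := by
            rw [← h1]
        _ = (-1 : L) ^ (n * (t + 1)) * mooreCof K ω i ^ q ^ (t + 1) := by
            rw [← mul_assoc, ← pow_add]
            congr 2
            ring
  -- the Moore matrix of the cofactors
  have hmoorec : mooreMatrix K (mooreCof K ω) =
      (adjugate M)ᵀ * Matrix.diagonal (fun j : Fin (n + 1) => (-1 : L) ^ (n * (j : ℕ))) := by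
    ext i j
    rw [Matrix.mul_diagonal, Matrix.transpose_apply]
    have hj : adjugate M j i = (-1 : L) ^ (n * (j : ℕ)) * (mooreCof K ω i) ^ q ^ (j : ℕ) := by
      have := claim (j : ℕ) j.isLt i
      rwa [Fin.eta] at this
    rw [hj]
    simp only [mooreMatrix, Matrix.of_apply]
    rw [mul_comm ((-1 : L) ^ (n * (j : ℕ))) _, mul_assoc, ← pow_add,
      Even.neg_one_pow ⟨n * (j : ℕ), rfl⟩, mul_one]
  have hdetc : (mooreMatrix K (mooreCof K ω)).det ≠ 0 := by
    rw [hmoorec, Matrix.det_mul, Matrix.det_transpose, Matrix.det_adjugate,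
      Matrix.det_diagonal]
    apply mul_ne_zero
    · exact pow_ne_zero _ hdetM
    · exact Finset.prod_ne_zero_iff.mpr fun j _ =>
        pow_ne_zero _ (neg_ne_zero.mpr one_ne_zero)
  -- the main argument
  intro x hx0 hxnorm
  by_contra hcon
  push_neg at hcon
  set u : Fin (n + 1) → L :=
    fun k => (-1 : L) ^ ((k : ℕ) * n) * x ^ ((q ^ (k : ℕ) - 1) / (q - 1)) with hu
  have hmv : mooreMatrix K (mooreCof K ω) *ᵥ u = 0 := by
    funext i
    have hT := hcon i
    simp only [Matrix.mulVec, dotProduct, Pi.zero_apply]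
    rw [← hT]
    simp only [Tproj, mooreMatrix, Matrix.of_apply, hu]
    exact Finset.sum_congr rfl fun k _ => by ring
  have hune : u ≠ 0 := by
    intro h0
    have h1 := congrFun h0 0
    simp only [hu, Pi.zero_apply, Fin.val_zero, zero_mul, pow_zero, one_mul,
      Nat.sub_self, Nat.zero_div] at h1
    exact one_ne_zero h1
  exact hdetc ((Matrix.exists_mulVec_eq_zero_iff).mp ⟨u, hune, hmv⟩)
end

section
/- With notation as above, for any y ∈ F_{q^n}^* and x = y^{q-1}, one has T_{W,j}(x)^q = (-1)^{n-1} x^{-1} T_{W,j}(x) for each 0 ≤ j ≤ n-1. -/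
theorem stmt13 (K L : Type*) [Field K] [Fintype K] [Field L] [Fintype L] [Algebra K L]
    (n : ℕ) (ω : Fin (n + 1) → L)
    (hω : ∃ b : Module.Basis (Fin (n + 1)) K L, ∀ i, b i = ω i) :
    ∀ (j : Fin (n + 1)) (y : L), y ≠ 0 →
      Tproj K ω j (y ^ (Fintype.card K - 1)) ^ Fintype.card K =
        (-1 : L) ^ n * (y ^ (Fintype.card K - 1))⁻¹ *
          Tproj K ω j (y ^ (Fintype.card K - 1)) := by
  obtain ⟨b, hb⟩ := hω
  intro j y hy
  have hq : 1 < Fintype.card K := Fintype.one_lt_card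
  set q := Fintype.card K with hqdef
  set c := mooreCof K ω j with hc
  obtain ⟨p, hp⟩ := CharP.exists K
  have hpp : p.Prime := CharP.char_is_prime K p
  haveI : Fact p.Prime := ⟨hpp⟩
  haveI : CharP L p := charP_of_injective_algebraMap (algebraMap K L).injective p
  obtain ⟨s, -, hs⟩ := FiniteField.card K p
  have hcardL : Fintype.card L = q ^ (n + 1) := by
    rw [Module.card_fintype b, Fintype.card_fin, hqdef]
  have hpow : ∀ a : L, a ^ q ^ (n + 1) = a := by
    intro a; rw [← hcardL]; exact FiniteField.pow_card a
  have hque : ∀ a : L, a ^ q = iterateFrobenius L p (s : ℕ) a := by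
    intro a; rw [iterateFrobenius_def, ← hs]
  have hneg : (-1 : L) ^ q = -1 := by
    rw [hque, map_neg, map_one]
  set u : ℕ → L := fun m => (-1 : L) ^ (m * n) * c ^ q ^ m * y ^ q ^ m with hu
  have hT : Tproj K ω j (y ^ (q - 1)) = (∑ m ∈ Finset.range (n + 1), u m) * y⁻¹ := by
    rw [Tproj, Finset.sum_mul,
      ← Fin.sum_univ_eq_sum_range (fun m => u m * y⁻¹) (n + 1)]
    rw [← hqdef, ← hc]
    refine Finset.sum_congr rfl fun m _ => ?_
    have hdvd : q - 1 ∣ q ^ (m : ℕ) - 1 := by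
      simpa using Nat.sub_dvd_pow_sub_pow q 1 (m : ℕ)
    have hx : (y ^ (q - 1)) ^ ((q ^ (m : ℕ) - 1) / (q - 1)) = y ^ q ^ (m : ℕ) * y⁻¹ := by
      rw [← pow_mul, Nat.mul_div_cancel' hdvd,
        pow_sub₀ y hy (Nat.one_le_pow _ _ (by omega)), pow_one]
    rw [hx, hu]; ring
  have hucyc : u (n + 1) = u 0 := by
    simp only [hu, Nat.zero_mul, pow_zero, pow_one, one_mul, hpow]
    rw [Even.neg_one_pow (by simpa [mul_comm] using Nat.even_mul_succ_self n), one_mul]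
  have huq : ∀ m, u m ^ q = (-1 : L) ^ n * u (m + 1) := by
    intro m
    have h1 : u m ^ q = (-1 : L) ^ (m * n) * c ^ q ^ (m + 1) * y ^ q ^ (m + 1) := by
      simp only [hu, mul_pow, ← pow_mul, ← pow_succ]
      rw [pow_mul, pow_right_comm, hneg]
    have hsign : ((-1 : L)) ^ (m * n) = (-1 : L) ^ n * (-1 : L) ^ ((m + 1) * n) := by
      rw [← pow_add]
      have he : n + (m + 1) * n = m * n + 2 * n := by ring
      rw [he, pow_add]
      simp [pow_mul]
    rw [h1, hsign, hu]; ring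
  have hSq : (∑ m ∈ Finset.range (n + 1), u m) ^ q
      = (-1 : L) ^ n * ∑ m ∈ Finset.range (n + 1), u m := by
    rw [hque, map_sum]
    have hterm : ∀ m, iterateFrobenius L p (s : ℕ) (u m) = (-1 : L) ^ n * u (m + 1) := by
      intro m; rw [← hque, huq]
    simp_rw [hterm]
    rw [← Finset.mul_sum]
    congr 1
    rw [Finset.sum_range_succ, hucyc, ← Finset.sum_range_succ' u n]
  rw [hT, mul_pow, hSq]
  have hyq : (y⁻¹) ^ q = y⁻¹ * (y ^ (q - 1))⁻¹ := by
    rw [inv_pow, ← mul_inv]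
    congr 1
    rw [← pow_succ']
    congr 1
    omega
  rw [hyq]
  ring
end
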